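/- Let X : ℝ³ → ℝ³ be a vector field, let U ⊆ ℝ³ be open, and for i = 1, …, n let fᵢ : ℝ³ → ℝ be differentiable functions with fᵢ(p) > 0 for all p ∈ U, and let kᵢ : ℝ³ → ℝ be functions such that the Lie derivative satisfies Dfᵢ(p)[X(p)] = kᵢ(p)·fᵢ(p) for all p ∈ U. Let λ₁, …, λₙ be real numbers and define F(p) = ∏ᵢ fᵢ(p)^{λᵢ} (real powers). Then F is differentiable on U and DF(p)[X(p)] = F(p) · ∑ᵢ λᵢ kᵢ(p) for all p ∈ U; in particular, DF(p)[X(p)] = 0 for all p ∈ U if and only if ∑ᵢ λᵢ kᵢ(p) = 0 for all p ∈ U. -/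

import Mathlib

open Finset

/-- Darboux integrability criterion: if fᵢ are positive Darboux functions of X on the
open set U with cofactors kᵢ, then F = ∏ fᵢ^{λᵢ} is differentiable on U with
DF(p)[X(p)] = F(p)·∑ λᵢkᵢ(p); in particular F is a first integral on U iff
∑ λᵢkᵢ vanishes on U. -/
theorem darboux_first_integral (n : ℕ) (X : (ℝ × ℝ × ℝ) → ℝ × ℝ × ℝ)
    (U : Set (ℝ × ℝ × ℝ)) (hU : IsOpen U)
    (f : Fin n → (ℝ × ℝ × ℝ) → ℝ) (k : Fin n → (ℝ × ℝ × ℝ) → ℝ) (lam : Fin n → ℝ)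
    (hdiff : ∀ i, ∀ p ∈ U, DifferentiableAt ℝ (f i) p)
    (hpos : ∀ i, ∀ p ∈ U, 0 < f i p)
    (hdarboux : ∀ i, ∀ p ∈ U, fderiv ℝ (f i) p (X p) = k i p * f i p)
    (F : (ℝ × ℝ × ℝ) → ℝ)
    (hF : ∀ p, F p = ∏ i : Fin n, (f i p) ^ (lam i)) :
    (∀ p ∈ U, DifferentiableAt ℝ F p) ∧
    (∀ p ∈ U, fderiv ℝ F p (X p) = F p * ∑ i : Fin n, lam i * k i p) ∧
    ((∀ p ∈ U, fderiv ℝ F p (X p) = 0) ↔ (∀ p ∈ U, ∑ i : Fin n, lam i * k i p = 0)) := by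
  set G : (ℝ × ℝ × ℝ) → ℝ :=
    fun q => Real.exp (∑ i : Fin n, Real.log (f i q) * lam i) with hGdef
  have hFG : ∀ q ∈ U, F q = G q := by
    intro q hq
    rw [hF, hGdef]
    simp only
    rw [Real.exp_sum]
    exact Finset.prod_congr rfl fun i _ => Real.rpow_def_of_pos (hpos i q hq) (lam i)
  have key : ∀ p ∈ U, HasFDerivAt G
      ((Real.exp (∑ i : Fin n, Real.log (f i p) * lam i)) •
        ∑ i : Fin n, (lam i) • ((f i p)⁻¹ • fderiv ℝ (f i) p)) p := by
    intro p hp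
    have hsum : HasFDerivAt (fun q => ∑ i : Fin n, Real.log (f i q) * lam i)
        (∑ i : Fin n, (lam i) • ((f i p)⁻¹ • fderiv ℝ (f i) p)) p := by
      apply HasFDerivAt.fun_sum
      intro i _
      have h1 : HasFDerivAt (fun q => Real.log (f i q)) ((f i p)⁻¹ • fderiv ℝ (f i) p) p :=
        ((hdiff i p hp).hasFDerivAt).log (ne_of_gt (hpos i p hp))
      exact h1.mul_const (lam i)
    exact hsum.exp
  have hfd : ∀ p ∈ U, F =ᶠ[nhds p] G := fun p hp =>
    Filter.eventuallyEq_of_mem (hU.mem_nhds hp) hFG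
  have hdF : ∀ p ∈ U, DifferentiableAt ℝ F p := fun p hp =>
    ((key p hp).differentiableAt).congr_of_eventuallyEq (hfd p hp)
  have hmain : ∀ p ∈ U, fderiv ℝ F p (X p) = F p * ∑ i : Fin n, lam i * k i p := by
    intro p hp
    rw [(hfd p hp).fderiv_eq, (key p hp).fderiv, hFG p hp]
    simp only [ContinuousLinearMap.smul_apply, ContinuousLinearMap.coe_sum',
      Finset.sum_apply, ContinuousLinearMap.coe_smul', Pi.smul_apply, smul_eq_mul, hGdef]
    congr 1
    refine Finset.sum_congr rfl fun i _ => ?_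
    rw [hdarboux i p hp]
    field_simp [ne_of_gt (hpos i p hp)]
  have hFpos : ∀ p ∈ U, 0 < F p := by
    intro p hp
    rw [hF]
    exact Finset.prod_pos fun i _ => Real.rpow_pos_of_pos (hpos i p hp) _
  refine ⟨hdF, hmain, ?_, ?_⟩
  · intro h p hp
    have h0 := h p hp
    rw [hmain p hp] at h0
    exact (mul_eq_zero.mp h0).resolve_left (ne_of_gt (hFpos p hp))
  · intro h p hp
    rw [hmain p hp, h p hp, mul_zero]
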